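/- arXiv:0903.4527 — 4 statements merged into one kernel-verified Lean document; each statement's English description precedes it below -/
import Mathlib

section
/- Let G be a finite connected multigraph with |E| ≥ |V|. Then there exists a polynomial p with integer coefficients such that for all complex β, θ_G(β, √−1) = (1 − β)^{|E|−|V|} · p(β); that is, ω_G(β) := θ_G(β, √−1) / (1 − β)^{|E|−|V|} lies in ℤ[β]. -/
/-- The polynomials `f_n` over ℂ defined by `f_0 = 1`, `f_1 = 0`,
`f_{n+1}(x) = x f_n(x) + f_{n-1}(x)`. -/
def chebFC : ℕ → ℂ → ℂ
  | 0, _ => 1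
  | 1, _ => 0
  | n + 2, x => x * chebFC (n + 1) x + chebFC n x

/-- `degM ep1 ep2 i s` is the degree of the node `i` in the multigraph edge
subset `s`; a loop at `i` counts twice. -/
def degM {V E : Type} [DecidableEq V] [DecidableEq E] (ep1 ep2 : E → V) (i : V)
    (s : Finset E) : ℕ :=
  (s.filter fun e => ep1 e = i).card + (s.filter fun e => ep2 e = i).card

/-- The multigraph polynomial `θ_G(β, ξ)` evaluated at `ξ = √-1`:
`θ_G(β, √-1) = Σ_{s ⊆ E} β^{|s|} Π_{i∈V} f_{d_i(s)}(√-1 - (√-1)⁻¹)`. -/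
noncomputable def thetaMI {V E : Type} [Fintype V] [DecidableEq V] [Fintype E] [DecidableEq E]
    (ep1 ep2 : E → V) (β : ℂ) : ℂ :=
  ∑ s : Finset E, β ^ s.card *
    ∏ i : V, chebFC (degM ep1 ep2 i s) (Complex.I - Complex.I⁻¹)

set_option linter.unusedSectionVars false

section Aux
variable {V E : Type} [Fintype V] [DecidableEq V] [Fintype E] [DecidableEq E]

def aM (ep1 ep2 : E → V) (i : V) (e : E) : ℕ :=
  (if ep1 e = i then 1 else 0) + (if ep2 e = i then 1 else 0)

def WM (ep1 ep2 : E → V) (i : V) (o : Option E) (s : Finset E) : ℂ :=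
  o.elim (-1) fun e => if e ∈ s then (aM ep1 ep2 i e : ℂ) else 0

def RgM (g : V → Option E) : Finset E :=
  Finset.univ.filter fun e => ∃ i, g i = some e

noncomputable def cCM (ep1 ep2 : E → V) (g : V → Option E) : ℂ :=
  ∏ i : V, (g i).elim (-1 : ℂ) (fun e => (aM ep1 ep2 i e : ℂ))

def cZM (ep1 ep2 : E → V) (g : V → Option E) : ℤ :=
  ∏ i : V, (g i).elim (-1 : ℤ) (fun e => (aM ep1 ep2 i e : ℤ))

lemma cZM_cast (ep1 ep2 : E → V) (g : V → Option E) :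
    ((cZM ep1 ep2 g : ℤ) : ℂ) = cCM ep1 ep2 g := by
  unfold cZM cCM
  push_cast
  refine Finset.prod_congr rfl fun i _ => ?_
  cases g i <;> simp

lemma degM_eq_sum (ep1 ep2 : E → V) (i : V) (s : Finset E) :
    degM ep1 ep2 i s = ∑ e ∈ s, aM ep1 ep2 i e := by
  unfold degM aM
  rw [Finset.card_filter, Finset.card_filter, ← Finset.sum_add_distrib]

lemma sum_degM (ep1 ep2 : E → V) (s : Finset E) :
    ∑ i : V, degM ep1 ep2 i s = 2 * s.card := by
  simp only [degM_eq_sum]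
  rw [Finset.sum_comm]
  have h : ∀ e : E, ∑ i : V, aM ep1 ep2 i e = 2 := by
    intro e
    simp [aM, Finset.sum_add_distrib]
  simp [h, two_mul, mul_comm]

lemma deg_sub_one (ep1 ep2 : E → V) (i : V) (s : Finset E) :
    ((degM ep1 ep2 i s : ℂ) - 1) = ∑ o : Option E, WM ep1 ep2 i o s := by
  rw [Fintype.sum_option]
  have : ∑ e : E, WM ep1 ep2 i (some e) s = (degM ep1 ep2 i s : ℂ) := by
    unfold WM
    simp only [Option.elim]
    rw [Finset.sum_ite_mem, Finset.univ_inter, degM_eq_sum]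
    push_cast
    rfl
  rw [this]
  unfold WM
  simp only [Option.elim]
  ring

lemma prod_WM (ep1 ep2 : E → V) (g : V → Option E) (s : Finset E) :
    ∏ i : V, WM ep1 ep2 i (g i) s
      = if RgM g ⊆ s then cCM ep1 ep2 g else 0 := by
  by_cases h : RgM g ⊆ s
  · rw [if_pos h]
    refine Finset.prod_congr rfl fun i _ => ?_
    cases hg : g i with
    | none => rfl
    | some e =>
      have he : e ∈ RgM g := by
        simp only [RgM, Finset.mem_filter, Finset.mem_univ, true_and]
        exact ⟨i, hg⟩
      simp [WM, h he]
  · rw [if_neg h]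
    rw [Finset.not_subset] at h
    obtain ⟨e, heR, hes⟩ := h
    simp only [RgM, Finset.mem_filter, Finset.mem_univ, true_and] at heR
    obtain ⟨i, hi⟩ := heR
    refine Finset.prod_eq_zero (Finset.mem_univ i) ?_
    simp [WM, hi, hes]

lemma card_RgM_le [Nonempty V] (g : V → Option E) :
    (RgM g).card ≤ Fintype.card V := by
  rw [← Finset.card_univ (α := V)]
  refine Finset.card_le_card_of_injOn
    (fun e => if h : ∃ i, g i = some e then h.choose else Classical.arbitrary V)
    (fun _ _ => Finset.mem_univ _) ?_
  intro e1 h1 e2 h2 hf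
  simp only [RgM, Finset.coe_filter, Set.mem_setOf_eq] at h1 h2
  obtain ⟨-, h1⟩ := h1
  obtain ⟨-, h2⟩ := h2
  simp only [dif_pos h1, dif_pos h2] at hf
  have s1 := h1.choose_spec
  have s2 := h2.choose_spec
  rw [hf, s2] at s1
  exact (Option.some_injective _ s1).symm

lemma sum_supersets (R : Finset E) (x : ℂ) :
    ∑ s : Finset E, (if R ⊆ s then x ^ s.card else 0)
      = x ^ R.card * (1 + x) ^ (Fintype.card E - R.card) := by
  rw [← Finset.sum_filter]
  have h1 : (1 + x) ^ (Fintype.card E - R.card) = ∑ t ∈ Rᶜ.powerset, x ^ t.card := by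
    have := Finset.prod_add (fun _ : E => x) (fun _ : E => (1:ℂ)) Rᶜ
    simp only [Finset.prod_const, Finset.prod_const_one, one_pow, mul_one] at this
    rw [← Finset.card_compl, ← this]
    simp [add_comm]
  rw [h1, Finset.mul_sum]
  refine Finset.sum_bij' (fun s _ => s \ R) (fun t _ => R ∪ t) ?_ ?_ ?_ ?_ ?_
  · intro s hs
    simp only [Finset.mem_filter] at hs
    simp only [Finset.mem_powerset]
    intro e he
    simp only [Finset.mem_sdiff] at he
    simp [he.2]
  · intro t ht
    simp only [Finset.mem_powerset] at ht
    simp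
  · intro s hs
    simp only [Finset.mem_filter] at hs
    exact Finset.union_sdiff_of_subset hs.2
  · intro t ht
    simp only [Finset.mem_powerset] at ht
    have hd : Disjoint R t := by
      rw [Finset.disjoint_right]
      intro e het heR
      have := ht het
      simp only [Finset.mem_compl] at this
      exact this heR
    exact Finset.union_sdiff_cancel_left hd
  · intro s hs
    simp only [Finset.mem_filter] at hs
    have hle := Finset.card_le_card hs.2
    rw [Finset.card_sdiff_of_subset hs.2, ← pow_add]
    congr 1
    omega

end Aux

lemma chebFC_I (n : ℕ) :
    chebFC n (Complex.I - Complex.I⁻¹) = -((n : ℂ) - 1) * Complex.I ^ n := by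
  induction n using Nat.twoStepInduction with
  | zero => simp [chebFC]
  | one => simp [chebFC]
  | more n ih2 ih1 =>
    rw [chebFC, ih1, ih2, Complex.inv_I]
    have h : Complex.I * Complex.I = -1 := Complex.I_mul_I
    push_cast
    rw [pow_succ, pow_succ]
    ring_nf
    linear_combination (-(2*(n:ℂ)) * Complex.I ^ n + ((n:ℂ)+1) * Complex.I^n) * h


theorem stmt_14 {V E : Type} [Fintype V] [DecidableEq V] [Fintype E] [DecidableEq E]
    -- a finite connected multigraph with `|E| ≥ |V|`
    (ep1 ep2 : E → V)
    (hconn : (SimpleGraph.fromRel fun a b => ∃ e, ep1 e = a ∧ ep2 e = b).Connected)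
    (hcard : Fintype.card V ≤ Fintype.card E) :
    ∃ p : Polynomial ℤ, ∀ β : ℂ,
      thetaMI ep1 ep2 β =
        (1 - β) ^ (Fintype.card E - Fintype.card V) * Polynomial.aeval β p := by
  have hV : Nonempty V := hconn.nonempty
  refine ⟨(-1) ^ Fintype.card V * ∑ g : V → Option E,
      Polynomial.C (cZM ep1 ep2 g) * (- Polynomial.X) ^ (RgM g).card *
        (1 - Polynomial.X) ^ (Fintype.card V - (RgM g).card), fun β => ?_⟩
  -- Step A: rewrite theta via chebFC_I
  have stepA : thetaMI ep1 ep2 β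
      = (-1 : ℂ) ^ Fintype.card V * ∑ s : Finset E,
          (-β) ^ s.card * ∏ i : V, ((degM ep1 ep2 i s : ℂ) - 1) := by
    unfold thetaMI
    rw [Finset.mul_sum]
    refine Finset.sum_congr rfl fun s _ => ?_
    have h1 : ∏ i : V, chebFC (degM ep1 ep2 i s) (Complex.I - Complex.I⁻¹)
        = ∏ i : V, (-(((degM ep1 ep2 i s : ℂ)) - 1) * Complex.I ^ (degM ep1 ep2 i s)) :=
      Finset.prod_congr rfl fun i _ => chebFC_I _
    rw [h1]
    have h2 : ∏ i : V, (-(((degM ep1 ep2 i s : ℂ)) - 1) * Complex.I ^ (degM ep1 ep2 i s))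
        = ((-1 : ℂ) ^ Fintype.card V * ∏ i : V, (((degM ep1 ep2 i s : ℂ)) - 1)) *
            Complex.I ^ (2 * s.card) := by
      rw [Finset.prod_mul_distrib, Finset.prod_pow_eq_pow_sum, sum_degM]
      congr 1
      calc ∏ i : V, -(((degM ep1 ep2 i s : ℂ)) - 1)
          = ∏ i : V, ((-1 : ℂ) * (((degM ep1 ep2 i s : ℂ)) - 1)) := by
            refine Finset.prod_congr rfl fun i _ => by ring
        _ = (-1 : ℂ) ^ Fintype.card V * ∏ i : V, (((degM ep1 ep2 i s : ℂ)) - 1) := by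
            rw [Finset.prod_mul_distrib, Finset.prod_const, Finset.card_univ]
    rw [h2, pow_mul, Complex.I_sq, neg_pow]
    ring
  -- Step B: expand the vertex product as a sum over g
  have stepB : ∀ s : Finset E, ∏ i : V, ((degM ep1 ep2 i s : ℂ) - 1)
      = ∑ g : V → Option E, (if RgM g ⊆ s then cCM ep1 ep2 g else 0) := by
    intro s
    have h1 : ∏ i : V, ((degM ep1 ep2 i s : ℂ) - 1)
        = ∏ i : V, ∑ o : Option E, WM ep1 ep2 i o s :=
      Finset.prod_congr rfl fun i _ => deg_sub_one ep1 ep2 i s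
    rw [h1]
    rw [Finset.prod_univ_sum]
    rw [Fintype.piFinset_univ]
    exact Finset.sum_congr rfl fun g _ => prod_WM ep1 ep2 g s
  -- Step C: swap sums and evaluate the inner sum
  have stepC : thetaMI ep1 ep2 β
      = (-1 : ℂ) ^ Fintype.card V * ∑ g : V → Option E,
          cCM ep1 ep2 g * ((-β) ^ (RgM g).card *
            (1 - β) ^ (Fintype.card E - (RgM g).card)) := by
    rw [stepA]
    congr 1
    calc ∑ s : Finset E, (-β) ^ s.card * ∏ i : V, ((degM ep1 ep2 i s : ℂ) - 1)
        = ∑ s : Finset E, ∑ g : V → Option E,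
            (if RgM g ⊆ s then cCM ep1 ep2 g * (-β) ^ s.card else 0) := by
          refine Finset.sum_congr rfl fun s _ => ?_
          rw [stepB s, Finset.mul_sum]
          refine Finset.sum_congr rfl fun g _ => ?_
          split <;> ring
      _ = ∑ g : V → Option E, ∑ s : Finset E,
            (if RgM g ⊆ s then cCM ep1 ep2 g * (-β) ^ s.card else 0) := Finset.sum_comm
      _ = ∑ g : V → Option E, cCM ep1 ep2 g * ((-β) ^ (RgM g).card *
            (1 - β) ^ (Fintype.card E - (RgM g).card)) := by
          refine Finset.sum_congr rfl fun g _ => ?_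
          have : ∀ s : Finset E, (if RgM g ⊆ s then cCM ep1 ep2 g * (-β) ^ s.card else 0)
              = cCM ep1 ep2 g * (if RgM g ⊆ s then (-β) ^ s.card else 0) := by
            intro s; split <;> ring
          simp only [this]
          rw [← Finset.mul_sum, sum_supersets]
          have h1 : (1 : ℂ) + -β = 1 - β := by ring
          rw [h1]
  rw [stepC]
  -- Step D: evaluate the polynomial
  rw [map_mul, map_pow, map_neg, map_one, map_sum]
  rw [Finset.mul_sum, Finset.mul_sum, Finset.mul_sum]
  refine Finset.sum_congr rfl fun g _ => ?_
  simp only [map_mul, map_pow, map_neg, map_sub, map_one, Polynomial.aeval_X,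
    Polynomial.aeval_C]
  have hc : (algebraMap ℤ ℂ) (cZM ep1 ep2 g) = cCM ep1 ep2 g := by
    simpa using cZM_cast ep1 ep2 g
  rw [hc]
  have hr : (RgM g).card ≤ Fintype.card V := card_RgM_le g
  have hpow : (1 - β) ^ (Fintype.card E - (RgM g).card)
      = (1 - β) ^ (Fintype.card E - Fintype.card V)
        * (1 - β) ^ (Fintype.card V - (RgM g).card) := by
    rw [← pow_add]
    congr 1
    omega
  rw [hpow]
  ring
end

section
/- Let B_L be the bouquet multigraph with a single vertex and L ≥ 1 loop edges. Then for all complex β, θ_{B_L}(β, √−1) = (1 − β)^{L−1} (1 + (2L − 1) β); equivalently ω_{B_L}(β) = 1 + (2L−1)β. -/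
lemma cheb_eval (k : ℕ) :
    chebFC (2*k) (2*Complex.I) = (-1)^k * (1 - 2*k) ∧
    chebFC (2*k+1) (2*Complex.I) = (-1)^k * (-(2*(k:ℂ))) * Complex.I := by
  induction k with
  | zero => simp [chebFC]
  | succ k ih =>
    obtain ⟨h1, h2⟩ := ih
    have e1 : 2*(k+1) = (2*k) + 2 := by ring
    have e2 : 2*(k+1)+1 = (2*k+1) + 2 := by ring
    have g1 : chebFC (2*(k+1)) (2*Complex.I)
        = 2*Complex.I * chebFC (2*k+1) (2*Complex.I) + chebFC (2*k) (2*Complex.I) := by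
      rw [e1]; rfl
    have g2 : chebFC (2*(k+1)+1) (2*Complex.I)
        = 2*Complex.I * chebFC (2*(k+1)) (2*Complex.I) + chebFC (2*k+1) (2*Complex.I) := by
      rw [e2, e1]; rfl
    have c1 : chebFC (2*(k+1)) (2*Complex.I) = (-1)^(k+1) * (1 - 2*((k:ℂ)+1)) := by
      rw [g1, h1, h2]
      linear_combination (-(4*(k:ℂ))*(-1)^k) * Complex.I_sq
    refine ⟨by push_cast at c1 ⊢; exact c1, ?_⟩
    rw [g2, c1, h2]
    push_cast
    ring

lemma sum_S {α : Type*} [DecidableEq α] (β : ℂ) (u : Finset α) :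
    ∑ t ∈ u.powerset, (-β)^t.card = (1-β)^u.card := by
  induction u using Finset.induction with
  | empty => simp
  | @insert a u ha ih =>
    rw [Finset.sum_powerset_insert ha, Finset.card_insert_of_notMem ha]
    have : ∑ t ∈ u.powerset, (-β)^(insert a t).card = ∑ t ∈ u.powerset, (-β) * (-β)^t.card := by
      refine Finset.sum_congr rfl fun t ht => ?_
      rw [Finset.card_insert_of_notMem fun h => ha (Finset.mem_powerset.mp ht h)]
      ring
    rw [this, ← Finset.mul_sum, ih, pow_succ]
    ring

lemma sum_D {α : Type*} [DecidableEq α] (β : ℂ) (u : Finset α) :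
    ∑ t ∈ u.powerset, (t.card : ℂ) * (-β)^t.card
      = (u.card : ℂ) * (-β) * (1-β)^(u.card - 1) := by
  induction u using Finset.induction with
  | empty => simp
  | @insert a u ha ih =>
    rw [Finset.sum_powerset_insert ha, Finset.card_insert_of_notMem ha]
    have : ∑ t ∈ u.powerset, ((insert a t).card : ℂ) * (-β)^(insert a t).card
        = ∑ t ∈ u.powerset, (-β) * (((t.card:ℂ) * (-β)^t.card) + (-β)^t.card) := by
      refine Finset.sum_congr rfl fun t ht => ?_
      rw [Finset.card_insert_of_notMem fun h => ha (Finset.mem_powerset.mp ht h)]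
      push_cast; ring
    rw [this, ← Finset.mul_sum, Finset.sum_add_distrib, ih, sum_S]
    rcases Nat.eq_zero_or_pos u.card with h | h
    · simp [h]
    · have h1 : u.card - 1 + 1 = u.card := Nat.succ_pred_eq_of_pos h
      have : (1-β)^u.card = (1-β)^(u.card-1) * (1-β) := by rw [← pow_succ, h1]
      rw [Nat.add_sub_cancel, this]
      push_cast
      ring

theorem stmt_15 (L : ℕ) (hL : 1 ≤ L) (β : ℂ) :
    -- the bouquet graph `B_L`: a single vertex and `L` loop edges
    thetaMI (fun _ : Fin L => (() : Unit)) (fun _ => ()) β =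
      (1 - β) ^ (L - 1) * (1 + (2 * (L : ℂ) - 1) * β) := by
  have hdeg : ∀ s : Finset (Fin L), degM (fun _ : Fin L => ()) (fun _ => ()) () s = 2 * s.card := by
    intro s; simp [degM]; ring
  have hterm : ∀ s : Finset (Fin L),
      β ^ s.card * ∏ i : Unit, chebFC (degM (fun _ : Fin L => ()) (fun _ => ()) i s)
        (Complex.I - Complex.I⁻¹)
      = (-β)^s.card + (-2) * ((s.card:ℂ) * (-β)^s.card) := by
    intro s
    have hI : Complex.I - Complex.I⁻¹ = 2 * Complex.I := by
      rw [Complex.inv_I]; ring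
    rw [Fintype.prod_unique, hdeg, hI, (cheb_eval s.card).1]
    simp only [neg_pow β s.card]
    ring
  rw [thetaMI]
  rw [Finset.sum_congr rfl fun s _ => hterm s]
  rw [← Finset.powerset_univ, Finset.sum_add_distrib, ← Finset.mul_sum, sum_S, sum_D]
  simp only [Finset.card_univ, Fintype.card_fin]
  obtain ⟨m, rfl⟩ := Nat.exists_eq_add_of_le hL
  rw [Nat.add_sub_cancel_left] at *
  have h2 : (1-β)^(1+m) = (1-β)^m * (1-β) := by rw [pow_add]; ring
  rw [h2]
  push_cast
  ring
end

section
/- Let G = (V,E) be a finite connected (q+1)-regular simple graph on n = |V| vertices with q ≥ 1. Then for every real u with u ≠ 0 and u² ≠ 1, θ_G(u², √−1) = (1 − u²)^{|E|−n} · α_G(1/u + q·u) · u^n; equivalently, ω_G(u²) = α_G(1/u + qu) u^n. -/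
/-- `degE i s` : the number of edges of `s` incident to `i`. -/
def degE {V : Type} [DecidableEq V] (i : V) (s : Finset (Sym2 V)) : ℕ :=
  (s.filter fun e => i ∈ e).card

/-- The graph polynomial `θ_G(β, ξ)` of a simple graph, evaluated at `ξ = √-1`:
`θ_G(β, √-1) = Σ_{s ⊆ E} β^{|s|} Π_{i∈V} f_{d_i(s)}(√-1 - (√-1)⁻¹)`. -/
noncomputable def thetaGI {V : Type} [Fintype V] [DecidableEq V]
    (G : SimpleGraph V) [DecidableRel G.Adj] (β : ℂ) : ℂ :=
  ∑ s ∈ G.edgeFinset.powerset, β ^ s.card *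
    ∏ i : V, chebFC (degE i s) (Complex.I - Complex.I⁻¹)

/-- `numMatchings G k` is the number of `k`-matchings of `G`: sets of `k` edges,
no two of which share a vertex. -/
def numMatchings {V : Type} [Fintype V] [DecidableEq V]
    (G : SimpleGraph V) [DecidableRel G.Adj] (k : ℕ) : ℕ :=
  (G.edgeFinset.powerset.filter fun M =>
    M.card = k ∧ ∀ i : V, degE i M ≤ 1).card

open Finset

section aux

variable {V : Type} [Fintype V] [DecidableEq V]

lemma chebFC_eval (d : ℕ) : chebFC d (Complex.I - Complex.I⁻¹) = (1 - d) * Complex.I ^ d := by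
  have h2 : Complex.I - Complex.I⁻¹ = 2 * Complex.I := by rw [Complex.inv_I]; ring
  induction d using Nat.twoStepInduction with
  | zero => simp [chebFC]
  | one => simp [chebFC]
  | more n ih1 ih2 =>
    rw [chebFC, ih1, ih2, h2]
    push_cast
    linear_combination ((1:ℂ) - n) * Complex.I ^ n * Complex.I_sq

lemma card_filter_mem_sym2 {V : Type} [Fintype V] [DecidableEq V] (e : Sym2 V)
    (he : ¬ e.IsDiag) : (univ.filter (fun v : V => v ∈ e)).card = 2 := by
  induction e with
  | _ x y =>
    have hxy : x ≠ y := by simpa using he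
    have h : (univ.filter (fun v : V => v ∈ s(x,y))) = {x, y} := by
      ext v; simp [Sym2.mem_iff]
    rw [h, card_insert_of_notMem (by simp [hxy]), card_singleton]

lemma handshake {V : Type} [Fintype V] [DecidableEq V] (s : Finset (Sym2 V))
    (hs : ∀ e ∈ s, ¬ e.IsDiag) : ∑ v : V, degE v s = 2 * s.card := by
  unfold degE
  have h1 : ∀ v : V, (s.filter fun e => v ∈ e).card = ∑ e ∈ s, if v ∈ e then 1 else 0 := by
    intro v; rw [Finset.card_filter]
  simp_rw [h1]
  rw [Finset.sum_comm]
  rw [Finset.sum_congr rfl (fun e he => ?_), Finset.sum_const, smul_eq_mul, mul_comm]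
  rw [← card_filter_mem_sym2 e (hs e he), Finset.card_filter]

lemma sum_powerset_pow {α : Type} [DecidableEq α] (A : Finset α) (y : ℂ) :
    ∑ t ∈ A.powerset, y ^ t.card = (1 + y) ^ A.card := by
  have := Finset.prod_add (fun _ : α => y) (fun _ : α => 1) A
  simp only [prod_const, one_pow, mul_one] at this
  rw [← this]
  ring

lemma sum_supersets_pow {α : Type} [DecidableEq α] (E R : Finset α) (hR : R ⊆ E) (y : ℂ) :
    ∑ s ∈ E.powerset.filter (fun s => R ⊆ s), y ^ s.card
      = y ^ R.card * (1 + y) ^ (E.card - R.card) := by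
  have key : ∑ s ∈ E.powerset.filter (fun s => R ⊆ s), y ^ s.card
      = ∑ t ∈ (E \ R).powerset, y ^ (t ∪ R).card := by
    refine Finset.sum_nbij' (fun s => s \ R) (fun t => t ∪ R) ?_ ?_ ?_ ?_ ?_
    · intro s hs; simp only [mem_filter, mem_powerset] at hs ⊢
      exact sdiff_subset_sdiff hs.1 (le_refl R)
    · intro t ht; simp only [mem_filter, mem_powerset] at ht ⊢
      exact ⟨union_subset (ht.trans (sdiff_subset)) hR, subset_union_right⟩
    · intro s hs; simp only [mem_filter, mem_powerset] at hs
      rw [Finset.sdiff_union_self_eq_union, union_eq_left.mpr hs.2]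
    · intro t ht; simp only [mem_powerset] at ht
      rw [Finset.union_sdiff_cancel_right]
      exact Finset.disjoint_left.mpr (fun a ha => (Finset.mem_sdiff.mp (ht ha)).2)
    · intro s hs; simp only [mem_filter, mem_powerset] at hs
      rw [Finset.sdiff_union_self_eq_union, union_eq_left.mpr hs.2]
  rw [key]
  have h2 : ∀ t ∈ (E \ R).powerset, y ^ (t ∪ R).card = y ^ R.card * y ^ t.card := by
    intro t ht; simp only [mem_powerset] at ht
    rw [card_union_of_disjoint, pow_add, mul_comm]
    exact Finset.disjoint_left.mpr (fun a ha => (Finset.mem_sdiff.mp (ht ha)).2)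
  rw [Finset.sum_congr rfl h2, ← Finset.mul_sum, sum_powerset_pow, card_sdiff_of_subset hR]
def pool (E : Finset (Sym2 V)) (A : Finset V) (v : V) : Finset (Option (Sym2 V)) :=
  if v ∈ A then insert none ((E.filter (fun e => v ∈ e)).image some) else {none}

def Cfg (E : Finset (Sym2 V)) (A : Finset V) : Finset (V → Option (Sym2 V)) :=
  Fintype.piFinset (pool E A)

def pc (c : V → Option (Sym2 V)) : ℕ := (univ.filter (fun v => c v ≠ none)).card

def ec (c : V → Option (Sym2 V)) : Finset (Sym2 V) := univ.biUnion (fun v => (c v).toFinset)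

lemma mem_ec {c : V → Option (Sym2 V)} {e : Sym2 V} : e ∈ ec c ↔ ∃ v, c v = some e := by
  simp [ec, Option.mem_toFinset, eq_comm]

lemma mem_cfg {E : Finset (Sym2 V)} {A : Finset V} {c : V → Option (Sym2 V)} :
    c ∈ Cfg E A ↔ ∀ v e, c v = some e → v ∈ A ∧ v ∈ e ∧ e ∈ E := by
  rw [Cfg, Fintype.mem_piFinset]
  constructor
  · intro h v e hve
    have := h v
    rw [pool] at this
    by_cases hA : v ∈ A
    · rw [if_pos hA] at this
      rw [hve] at this
      simp only [mem_insert, reduceCtorEq, mem_image, mem_filter, false_or] at this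
      obtain ⟨e', ⟨he', hve'⟩, heq⟩ := this
      cases Option.some.inj heq
      exact ⟨hA, hve', he'⟩
    · rw [if_neg hA] at this
      rw [hve] at this
      simp at this
  · intro h v
    rw [pool]
    cases hcv : c v with
    | none => split <;> simp
    | some e =>
      obtain ⟨hA, hve, he⟩ := h v e hcv
      rw [if_pos hA]
      simp only [mem_insert, reduceCtorEq, mem_image, mem_filter, false_or]
      exact ⟨e, ⟨he, hve⟩, rfl⟩

lemma ec_subset {E : Finset (Sym2 V)} {A : Finset V} {c : V → Option (Sym2 V)}
    (hc : c ∈ Cfg E A) : ec c ⊆ E := by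
  intro e he
  obtain ⟨v, hv⟩ := mem_ec.mp he
  exact ((mem_cfg.mp hc) v e hv).2.2

noncomputable def FF (E : Finset (Sym2 V)) (γ : ℂ) (A : Finset V) : ℂ :=
  ∑ c ∈ Cfg E A, (-1 : ℂ) ^ (pc c) * γ ^ (ec c).card

lemma prod_ite_none (c : V → Option (Sym2 V)) :
    (∏ v : V, if c v = none then (1:ℂ) else -1) = (-1 : ℂ) ^ (pc c) := by
  rw [Finset.prod_ite, Finset.prod_const, Finset.prod_const, one_pow, one_mul, pc]

lemma prod_one_sub_deg (s : Finset (Sym2 V)) :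
    ∏ v : V, ((1:ℂ) - (degE v s : ℂ)) = ∑ c ∈ Cfg s univ, (-1 : ℂ)^(pc c) := by
  have h1 : ∀ v : V, ((1:ℂ) - (degE v s : ℂ))
      = ∑ o ∈ pool s univ v, (if o = none then (1:ℂ) else -1) := by
    intro v
    rw [pool, if_pos (mem_univ v), Finset.sum_insert (by simp), if_pos rfl,
      Finset.sum_image (by simp)]
    rw [Finset.sum_congr rfl (fun e _ => if_neg (by simp)), Finset.sum_const, degE]
    simp only [nsmul_eq_mul, mul_neg, mul_one]
    ring
  rw [Finset.prod_congr rfl (fun v _ => h1 v), Finset.prod_univ_sum]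
  exact Finset.sum_congr rfl fun c _ => prod_ite_none c

lemma cfg_eq_filter {E : Finset (Sym2 V)} (s : Finset (Sym2 V)) (hs : s ⊆ E) :
    Cfg s univ = (Cfg E univ).filter (fun c => ec c ⊆ s) := by
  ext c
  simp only [mem_filter, mem_cfg]
  constructor
  · intro h
    refine ⟨fun v e hv => ⟨mem_univ v, (h v e hv).2.1, hs (h v e hv).2.2⟩, ?_⟩
    intro e he
    obtain ⟨v, hv⟩ := mem_ec.mp he
    exact (h v e hv).2.2
  · rintro ⟨h, hsub⟩ v e hv
    exact ⟨mem_univ v, (h v e hv).2.1, hsub (mem_ec.mpr ⟨v, hv⟩)⟩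

lemma theta_as_config (E : Finset (Sym2 V)) (β : ℂ) :
    ∑ s ∈ E.powerset, (-β)^s.card * ∏ v : V, ((1:ℂ) - (degE v s : ℂ))
      = ∑ c ∈ Cfg E univ, (-1:ℂ)^(pc c) * ((-β)^(ec c).card * (1-β)^(E.card - (ec c).card)) := by
  have step1 : ∀ s ∈ E.powerset, (-β)^s.card * ∏ v : V, ((1:ℂ) - (degE v s : ℂ))
      = ∑ c ∈ Cfg E univ, (if ec c ⊆ s then (-1:ℂ)^(pc c) * (-β)^s.card else 0) := by
    intro s hs
    rw [prod_one_sub_deg, cfg_eq_filter s (mem_powerset.mp hs), Finset.mul_sum,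
      Finset.sum_filter]
    refine Finset.sum_congr rfl fun c _ => ?_
    split <;> ring_nf
  rw [Finset.sum_congr rfl step1, Finset.sum_comm]
  refine Finset.sum_congr rfl fun c hc => ?_
  rw [← Finset.sum_filter]
  have : ∑ s ∈ E.powerset.filter (fun s => ec c ⊆ s), (-1:ℂ)^(pc c) * (-β)^s.card
      = (-1:ℂ)^(pc c) * ∑ s ∈ E.powerset.filter (fun s => ec c ⊆ s), (-β)^s.card := by
    rw [Finset.mul_sum]
  rw [this, sum_supersets_pow E (ec c) (ec_subset hc) (-β)]
  have h1 : (1 : ℂ) + -β = 1 - β := by ring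
  rw [h1]

lemma mem_pool_iff {E : Finset (Sym2 V)} {A : Finset V} {a : V} (ha : a ∈ A)
    {o : Option (Sym2 V)} :
    o ∈ pool E A a ↔ o = none ∨ ∃ e, o = some e ∧ a ∈ e ∧ e ∈ E := by
  rw [pool, if_pos ha]
  simp only [mem_insert, mem_image, mem_filter]
  constructor
  · rintro (h | ⟨e, ⟨he, hae⟩, heq⟩)
    · exact Or.inl h
    · exact Or.inr ⟨e, heq.symm, hae, he⟩
  · rintro (h | ⟨e, heq, hae, he⟩)
    · exact Or.inl h
    · exact Or.inr ⟨e, ⟨he, hae⟩, heq.symm⟩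

lemma cfg_none_of_not_mem {E : Finset (Sym2 V)} {A : Finset V} {c : V → Option (Sym2 V)}
    (hc : c ∈ Cfg E A) {v : V} (hv : v ∉ A) : c v = none := by
  cases hcv : c v with
  | none => rfl
  | some e => exact absurd ((mem_cfg.mp hc) v e hcv).1 hv

lemma pool_erase_ne {E : Finset (Sym2 V)} {A : Finset V} {a v : V} (hv : v ≠ a) :
    pool E (A.erase a) v = pool E A v := by
  simp [pool, Finset.mem_erase, hv]

lemma sum_cfg_split {E : Finset (Sym2 V)} {A : Finset V} {a : V} (ha : a ∈ A)
    (f : (V → Option (Sym2 V)) → ℂ) :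
    ∑ c ∈ Cfg E A, f c
      = ∑ o ∈ pool E A a, ∑ c ∈ Cfg E (A.erase a), f (Function.update c a o) := by
  rw [← Finset.sum_product']
  refine (Finset.sum_nbij' (fun p : Option (Sym2 V) × (V → Option (Sym2 V)) =>
      Function.update p.2 a p.1)
    (fun c => (c a, Function.update c a none)) ?_ ?_ ?_ ?_ ?_).symm
  · -- maps into Cfg A
    intro p hp
    rw [Finset.mem_product] at hp
    rw [Cfg, Fintype.mem_piFinset]
    intro v
    by_cases hv : v = a
    · subst hv; rw [Function.update_self]; exact hp.1
    · rw [Function.update_of_ne hv]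
      have := Fintype.mem_piFinset.mp hp.2 v
      rwa [pool_erase_ne hv] at this
  · -- maps into product
    intro c hc
    rw [Finset.mem_product]
    refine ⟨Fintype.mem_piFinset.mp hc a, ?_⟩
    rw [Cfg, Fintype.mem_piFinset]
    intro v
    dsimp only
    by_cases hv : v = a
    · subst hv
      rw [Function.update_self, pool, if_neg (by simp)]
      simp
    · rw [Function.update_of_ne hv, pool_erase_ne hv]
      exact Fintype.mem_piFinset.mp hc v
  · intro p hp
    obtain ⟨o, c⟩ := p
    rw [Finset.mem_product] at hp
    have h2 : c a = none := cfg_none_of_not_mem hp.2 (Finset.notMem_erase a A)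
    dsimp only
    rw [Function.update_self, Function.update_idem]
    congr 1
    exact Function.update_eq_self_iff.mpr h2.symm
  · intro c hc
    dsimp only
    rw [Function.update_idem, Function.update_eq_self]
  · intro p hp
    rfl

lemma pc_update {c : V → Option (Sym2 V)} {a : V} (hca : c a = none) (e : Sym2 V) :
    pc (Function.update c a (some e)) = pc c + 1 := by
  unfold pc
  have h : univ.filter (fun v => Function.update c a (some e) v ≠ none)
      = insert a (univ.filter (fun v => c v ≠ none)) := by
    ext v
    by_cases hv : v = a
    · subst hv; simp [Function.update_self]
    · simp [Function.update_of_ne hv, hv]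
  rw [h, card_insert_of_notMem (by simp [hca])]

lemma ec_update {c : V → Option (Sym2 V)} {a : V} (hca : c a = none) (e : Sym2 V) :
    ec (Function.update c a (some e)) = insert e (ec c) := by
  ext e'
  rw [mem_ec, mem_insert, mem_ec]
  constructor
  · rintro ⟨v, hv⟩
    by_cases hva : v = a
    · subst hva; rw [Function.update_self] at hv; exact Or.inl (Option.some.inj hv).symm
    · rw [Function.update_of_ne hva] at hv; exact Or.inr ⟨v, hv⟩
  · rintro (rfl | ⟨v, hv⟩)
    · exact ⟨a, Function.update_self a (some e') c⟩
    · have hva : v ≠ a := fun h => by rw [h, hca] at hv; cases hv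
      exact ⟨v, by rw [Function.update_of_ne hva]; exact hv⟩

-- neighbors of a within edge pool E
def nbrE (E : Finset (Sym2 V)) (a : V) : Finset V :=
  univ.filter (fun b => s(a,b) ∈ E ∧ b ≠ a)

lemma filter_eq_image_nbr {E : Finset (Sym2 V)} (hE : ∀ e ∈ E, ¬ e.IsDiag) (a : V) :
    E.filter (fun e => a ∈ e) = (nbrE E a).image (fun b => s(a,b)) := by
  ext e
  simp only [mem_filter, mem_image, nbrE, mem_filter, mem_univ, true_and]
  constructor
  · rintro ⟨he, hae⟩
    induction e with
    | _ x y =>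
      rcases Sym2.mem_iff.mp hae with rfl | rfl
      · exact ⟨y, ⟨he, fun h => hE _ he (by simp [h])⟩, rfl⟩
      · exact ⟨x, ⟨by rwa [Sym2.eq_swap], fun h => hE _ he (by simp [Sym2.mk_isDiag_iff, h])⟩,
          Sym2.eq_swap⟩
  · rintro ⟨b, ⟨hb, hba⟩, rfl⟩
    exact ⟨hb, by simp⟩

lemma sum_pool {E : Finset (Sym2 V)} (hE : ∀ e ∈ E, ¬ e.IsDiag) {A : Finset V} {a : V}
    (ha : a ∈ A) (f : Option (Sym2 V) → ℂ) :
    ∑ o ∈ pool E A a, f o = f none + ∑ b ∈ nbrE E a, f (some s(a,b)) := by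
  have hinj : ∀ b ∈ nbrE E a, ∀ b' ∈ nbrE E a,
      (some ∘ fun b => s(a,b)) b = (some ∘ fun b => s(a,b)) b' → b = b' := by
    intro b _ b' _ hbb
    have := Option.some.inj hbb
    rwa [Sym2.congr_right] at this
  rw [pool, if_pos ha, Finset.sum_insert (by simp), filter_eq_image_nbr hE a,
    Finset.image_image, Finset.sum_image hinj]
  rfl

lemma not_mem_ec {E : Finset (Sym2 V)} {A : Finset V} {c : V → Option (Sym2 V)}
    (hc : c ∈ Cfg E A) {a b : V} (hca : c a = none) (hcb : c b = none) :
    s(a,b) ∉ ec c := by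
  intro h
  obtain ⟨v, hv⟩ := mem_ec.mp h
  have hve := ((mem_cfg.mp hc) v _ hv).2.1
  rcases Sym2.mem_iff.mp hve with rfl | rfl
  · rw [hca] at hv; cases hv
  · rw [hcb] at hv; cases hv

lemma update_none_eq {c : V → Option (Sym2 V)} {a : V} (h : c a = none) :
    Function.update c a none = c := by
  funext v
  by_cases hv : v = a
  · subst hv; rw [Function.update_self, h]
  · rw [Function.update_of_ne hv]

lemma FF_rec {E : Finset (Sym2 V)} (hE : ∀ e ∈ E, ¬ e.IsDiag) (γ : ℂ) {A : Finset V} {a : V}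
    (ha : a ∈ A) :
    FF E γ A = (1 - (nbrE E a).card * γ) * FF E γ (A.erase a)
      + ∑ b ∈ (nbrE E a).filter (fun b => b ∈ A.erase a),
          (γ - γ^2) * FF E γ ((A.erase a).erase b) := by
  classical
  set A' := A.erase a with hA'
  have haA' : a ∉ A' := Finset.notMem_erase a A
  rw [FF, sum_cfg_split (E := E) ha (fun c => (-1 : ℂ)^(pc c) * γ^(ec c).card),
    sum_pool hE ha]
  -- the `none` term
  have hnone : (∑ c ∈ Cfg E A', (-1:ℂ)^(pc (Function.update c a none)) *
      γ^(ec (Function.update c a none)).card) = FF E γ A' := by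
    rw [FF]
    refine Finset.sum_congr rfl fun c hc => ?_
    rw [update_none_eq (cfg_none_of_not_mem hc haA')]
  -- the neighbor terms
  have hnbr : ∀ b ∈ nbrE E a,
      (∑ c ∈ Cfg E A', (-1:ℂ)^(pc (Function.update c a (some s(a,b)))) *
        γ^(ec (Function.update c a (some s(a,b)))).card)
      = -γ * FF E γ A' + (if b ∈ A' then (γ - γ^2) * FF E γ (A'.erase b) else 0) := by
    intro b hb
    simp only [nbrE, mem_filter, mem_univ, true_and] at hb
    obtain ⟨heE, hba⟩ := hb
    set e := s(a,b) with he
    have hbe : b ∈ e := Sym2.mem_iff.mpr (Or.inr rfl)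
    have step : ∀ c ∈ Cfg E A', (-1:ℂ)^(pc (Function.update c a (some e))) *
        γ^(ec (Function.update c a (some e))).card
        = (-1:ℂ)^(pc c + 1) * γ^(insert e (ec c)).card := by
      intro c hc
      rw [pc_update (cfg_none_of_not_mem hc haA') e, ec_update (cfg_none_of_not_mem hc haA') e]
    rw [Finset.sum_congr rfl step]
    by_cases hbA : b ∈ A'
    · -- b active
      rw [if_pos hbA]
      rw [← Finset.sum_filter_add_sum_filter_not (Cfg E A') (fun c => c b = some e)]
      have hP : ∀ c ∈ (Cfg E A').filter (fun c => c b = some e),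
          (-1:ℂ)^(pc c + 1) * γ^(insert e (ec c)).card
          = -1 * ((-1:ℂ)^(pc c) * γ^(ec c).card) := by
        intro c hc
        rw [mem_filter] at hc
        rw [Finset.insert_eq_self.mpr (mem_ec.mpr ⟨b, hc.2⟩), pow_succ]
        ring
      have hnP : ∀ c ∈ (Cfg E A').filter (fun c => ¬ c b = some e),
          (-1:ℂ)^(pc c + 1) * γ^(insert e (ec c)).card
          = -γ * ((-1:ℂ)^(pc c) * γ^(ec c).card) := by
        intro c hc
        rw [mem_filter] at hc
        have hne : e ∉ ec c := by
          intro hmem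
          obtain ⟨v, hv⟩ := mem_ec.mp hmem
          have hve := ((mem_cfg.mp hc.1) v _ hv).2.1
          rcases Sym2.mem_iff.mp hve with rfl | rfl
          · rw [cfg_none_of_not_mem hc.1 haA'] at hv; cases hv
          · exact hc.2 hv
        rw [Finset.card_insert_of_notMem hne, pow_succ, pow_succ]
        ring
      rw [Finset.sum_congr rfl hP, Finset.sum_congr rfl hnP, ← Finset.mul_sum,
        ← Finset.mul_sum]
      have hsum := Finset.sum_filter_add_sum_filter_not (Cfg E A') (fun c => c b = some e)
        (fun c => (-1:ℂ)^(pc c) * γ^(ec c).card)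
      -- T : sum over c with c b = some e
      have hT : (∑ c ∈ (Cfg E A').filter (fun c => c b = some e),
          (-1:ℂ)^(pc c) * γ^(ec c).card) = -γ * FF E γ (A'.erase b) := by
        have hsplit := sum_cfg_split (E := E) hbA (fun c => if c b = some e
          then (-1:ℂ)^(pc c) * γ^(ec c).card else 0)
        rw [← Finset.sum_filter] at hsplit
        rw [hsplit]
        have h1 : ∀ o ∈ pool E A' b, (∑ c' ∈ Cfg E (A'.erase b),
            if Function.update c' b o b = some e
            then (-1:ℂ)^(pc (Function.update c' b o)) * γ^(ec (Function.update c' b o)).card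
            else 0)
            = if o = some e then (∑ c' ∈ Cfg E (A'.erase b),
                (-1:ℂ)^(pc (Function.update c' b (some e))) *
                  γ^(ec (Function.update c' b (some e))).card) else 0 := by
          intro o _
          by_cases ho : o = some e
          · subst ho
            simp only [Function.update_self]
            simp
          · simp only [Function.update_self, ho, if_false]
            exact Finset.sum_const_zero
        rw [Finset.sum_congr rfl h1, Finset.sum_ite_eq' (pool E A' b) (some e)]
        rw [if_pos (by rw [mem_pool_iff hbA]; exact Or.inr ⟨e, rfl, hbe, heE⟩)]
        have h2 : ∀ c' ∈ Cfg E (A'.erase b),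
            (-1:ℂ)^(pc (Function.update c' b (some e))) *
              γ^(ec (Function.update c' b (some e))).card
            = -γ * ((-1:ℂ)^(pc c') * γ^(ec c').card) := by
          intro c' hc'
          have hc'b : c' b = none := cfg_none_of_not_mem hc' (Finset.notMem_erase b A')
          have hc'a : c' a = none := cfg_none_of_not_mem hc'
            (fun h => haA' (Finset.mem_of_mem_erase h))
          rw [pc_update hc'b e, ec_update hc'b e,
            Finset.card_insert_of_notMem (not_mem_ec hc' hc'a hc'b), pow_succ, pow_succ]
          ring
        rw [Finset.sum_congr rfl h2, ← Finset.mul_sum, FF]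
      rw [hT] at hsum ⊢
      simp only [FF] at hsum ⊢
      linear_combination (-γ) * hsum
    · -- b inactive
      rw [if_neg hbA, add_zero]
      have hstep2 : ∀ c ∈ Cfg E A', (-1:ℂ)^(pc c + 1) * γ^(insert e (ec c)).card
          = -γ * ((-1:ℂ)^(pc c) * γ^(ec c).card) := by
        intro c hc
        have hne : e ∉ ec c :=
          not_mem_ec hc (cfg_none_of_not_mem hc haA') (cfg_none_of_not_mem hc hbA)
        rw [Finset.card_insert_of_notMem hne, pow_succ, pow_succ]
        ring
      rw [Finset.sum_congr rfl hstep2, ← Finset.mul_sum, FF]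
  rw [hnone, Finset.sum_congr rfl hnbr, Finset.sum_add_distrib, Finset.sum_const,
    ← Finset.sum_filter]
  simp only [nsmul_eq_mul]
  ring
def MatchF (E : Finset (Sym2 V)) (A : Finset V) : Finset (Finset (Sym2 V)) :=
  E.powerset.filter (fun M => (∀ v : V, degE v M ≤ 1) ∧ ∀ v : V, 0 < degE v M → v ∈ A)

noncomputable def RR (E : Finset (Sym2 V)) (γ : ℂ) (q : ℕ) (A : Finset V) : ℂ :=
  ∑ M ∈ MatchF E A, (γ - γ^2)^M.card * (1 - ((q:ℂ)+1)*γ)^(A.card - 2*M.card)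

lemma degE_pos_iff {v : V} {M : Finset (Sym2 V)} : 0 < degE v M ↔ ∃ e ∈ M, v ∈ e := by
  rw [degE, Finset.card_pos, Finset.filter_nonempty_iff]

lemma degE_mono {v : V} {s t : Finset (Sym2 V)} (h : s ⊆ t) : degE v s ≤ degE v t :=
  Finset.card_le_card (Finset.filter_subset_filter _ h)

lemma card_covered {E M : Finset (Sym2 V)} (hE : ∀ e ∈ E, ¬ e.IsDiag) (hM : M ⊆ E)
    (hdeg : ∀ v : V, degE v M ≤ 1) :
    (univ.filter (fun v => 0 < degE v M)).card = 2 * M.card := by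
  rw [← handshake M (fun e he => hE e (hM he)), Finset.card_filter]
  exact Finset.sum_congr rfl fun v _ => by have := hdeg v; split <;> omega

lemma two_mul_card_le {E M : Finset (Sym2 V)} {A : Finset V} (hE : ∀ e ∈ E, ¬ e.IsDiag)
    (hM : M ∈ MatchF E A) : 2 * M.card ≤ A.card := by
  rw [MatchF, mem_filter, mem_powerset] at hM
  rw [← card_covered hE hM.1 hM.2.1]
  exact Finset.card_le_card (fun v hv => hM.2.2 v (mem_filter.mp hv).2)

lemma matchF_erase_eq {E : Finset (Sym2 V)} {A : Finset V} {a : V} :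
    (MatchF E A).filter (fun M => ¬ 0 < degE a M) = MatchF E (A.erase a) := by
  ext M
  simp only [MatchF, mem_filter, mem_powerset]
  constructor
  · rintro ⟨⟨hsub, hdeg, hcov⟩, hda⟩
    refine ⟨hsub, hdeg, fun v hv => Finset.mem_erase.mpr ⟨?_, hcov v hv⟩⟩
    rintro rfl; exact hda hv
  · rintro ⟨hsub, hdeg, hcov⟩
    refine ⟨⟨hsub, hdeg, fun v hv => Finset.mem_of_mem_erase (hcov v hv)⟩, fun hda => ?_⟩
    exact Finset.notMem_erase a A (hcov a hda)

lemma exists_other {e : Sym2 V} (hd : ¬ e.IsDiag) {a : V} (hae : a ∈ e) :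
    ∃ b, b ≠ a ∧ e = s(a,b) := by
  induction e with
  | _ x y =>
    have hxy : x ≠ y := by simpa using hd
    rcases Sym2.mem_iff.mp hae with rfl | rfl
    · exact ⟨y, fun h => hxy h.symm, rfl⟩
    · exact ⟨x, hxy, Sym2.eq_swap⟩

lemma two_le_degE {M : Finset (Sym2 V)} {a : V} {e f : Sym2 V} (he : e ∈ M) (hf : f ∈ M)
    (hef : e ≠ f) (hae : a ∈ e) (haf : a ∈ f) : 2 ≤ degE a M := by
  have hsub : ({e, f} : Finset (Sym2 V)) ⊆ M.filter (fun e => a ∈ e) := by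
    intro x hx
    rcases Finset.mem_insert.mp hx with rfl | hx
    · exact Finset.mem_filter.mpr ⟨he, hae⟩
    · rw [Finset.mem_singleton.mp hx]; exact Finset.mem_filter.mpr ⟨hf, haf⟩
  calc 2 = ({e, f} : Finset (Sym2 V)).card := (Finset.card_pair hef).symm
    _ ≤ _ := Finset.card_le_card hsub

lemma degE_insert_of_not_mem {M : Finset (Sym2 V)} {e : Sym2 V} (he : e ∉ M) (v : V) :
    degE v (insert e M) = (if v ∈ e then 1 else 0) + degE v M := by
  rw [degE, Finset.filter_insert]
  split
  · rw [Finset.card_insert_of_notMem (fun h => he (Finset.mem_filter.mp h).1)]; rw [degE]; omega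
  · rw [degE]; omega

lemma hcov_lemma {E : Finset (Sym2 V)} (hE : ∀ e ∈ E, ¬ e.IsDiag) (γ : ℂ) (q : ℕ)
    {A : Finset V} {a : V} (ha : a ∈ A) :
    ∑ M ∈ (MatchF E A).filter (fun M => 0 < degE a M),
      (γ - γ^2)^M.card * (1 - ((q:ℂ)+1)*γ)^(A.card - 2*M.card)
      = ∑ b ∈ (nbrE E a).filter (fun b => b ∈ A.erase a),
          (γ - γ^2) * RR E γ q ((A.erase a).erase b) := by
  classical
  set δ := (1 - ((q:ℂ)+1)*γ) with hδ
  set Nb := (nbrE E a).filter (fun b => b ∈ A.erase a) with hNb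
  -- Step A : expand each covered matching as a sum over the neighbour its a-edge uses
  have stepA : ∀ M ∈ (MatchF E A).filter (fun M => 0 < degE a M),
      (γ - γ^2)^M.card * δ^(A.card - 2*M.card)
      = ∑ b ∈ Nb, (if s(a,b) ∈ M then (γ - γ^2)^M.card * δ^(A.card - 2*M.card) else 0) := by
    intro M hM
    rw [Finset.mem_filter] at hM
    obtain ⟨hMm, hda⟩ := hM
    have hMm' := hMm
    rw [MatchF, Finset.mem_filter, Finset.mem_powerset] at hMm'
    obtain ⟨hsub, hdeg, hcov⟩ := hMm'
    obtain ⟨e, heM, hae⟩ := degE_pos_iff.mp hda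
    obtain ⟨b₀, hb₀a, rfl⟩ := exists_other (hE e (hsub heM)) hae
    have hset : Nb.filter (fun b => s(a,b) ∈ M) = {b₀} := by
      ext b
      simp only [Finset.mem_filter, Finset.mem_singleton, hNb, nbrE, Finset.mem_univ,
        true_and]
      constructor
      · rintro ⟨⟨⟨hbE, hba⟩, hbA⟩, hbM⟩
        by_contra hne
        have hne2 : s(a,b) ≠ s(a,b₀) := fun h => hne (Sym2.congr_right.mp h)
        have h2 := two_le_degE hbM heM hne2 (Sym2.mem_iff.mpr (Or.inl rfl))
          (Sym2.mem_iff.mpr (Or.inl rfl))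
        have := hdeg a; omega
      · rintro rfl
        refine ⟨⟨⟨hsub heM, hb₀a⟩, ?_⟩, heM⟩
        refine Finset.mem_erase.mpr ⟨hb₀a, hcov _ ?_⟩
        exact degE_pos_iff.mpr ⟨_, heM, Sym2.mem_iff.mpr (Or.inr rfl)⟩
    rw [← Finset.sum_filter, hset, Finset.sum_singleton]
  rw [Finset.sum_congr rfl stepA, Finset.sum_comm]
  refine Finset.sum_congr rfl fun b hb => ?_
  rw [hNb, Finset.mem_filter] at hb
  obtain ⟨hbn, hbA⟩ := hb
  rw [nbrE, Finset.mem_filter] at hbn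
  obtain ⟨-, hbE, hba⟩ := hbn
  have hbA' : b ∈ A := Finset.mem_of_mem_erase hbA
  set e := s(a,b) with he
  have hae : a ∈ e := Sym2.mem_iff.mpr (Or.inl rfl)
  have hbe : b ∈ e := Sym2.mem_iff.mpr (Or.inr rfl)
  -- Step B : the inner sum equals the sum over matchings containing e
  have stepB : ∑ M ∈ (MatchF E A).filter (fun M => 0 < degE a M),
      (if e ∈ M then (γ - γ^2)^M.card * δ^(A.card - 2*M.card) else 0)
      = ∑ M ∈ (MatchF E A).filter (fun M => e ∈ M),
          (γ - γ^2)^M.card * δ^(A.card - 2*M.card) := by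
    rw [← Finset.sum_filter, Finset.filter_filter]
    apply Finset.sum_congr _ (fun _ _ => rfl)
    apply Finset.filter_congr
    intro M hM
    simp only [and_iff_right_iff_imp]
    intro heM
    exact degE_pos_iff.mpr ⟨e, heM, hae⟩
  rw [stepB, RR, Finset.mul_sum]
  -- Step C : bijection M ↦ M.erase e
  refine Finset.sum_nbij' (fun M => M.erase e) (fun M' => insert e M') ?_ ?_ ?_ ?_ ?_
  · -- erase lands in MatchF of the smaller set
    intro M hM
    rw [Finset.mem_filter] at hM
    obtain ⟨hMm, heM⟩ := hM
    rw [MatchF, Finset.mem_filter, Finset.mem_powerset] at hMm ⊢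
    obtain ⟨hsub, hdeg, hcov⟩ := hMm
    refine ⟨(Finset.erase_subset e M).trans hsub, fun v => le_trans
      (degE_mono (Finset.erase_subset e M)) (hdeg v), fun v hv => ?_⟩
    obtain ⟨f, hf, hvf⟩ := degE_pos_iff.mp hv
    have hfM : f ∈ M := Finset.mem_of_mem_erase hf
    have hfe : f ≠ e := Finset.ne_of_mem_erase hf
    have hvA : v ∈ A := hcov v (degE_pos_iff.mpr ⟨f, hfM, hvf⟩)
    refine Finset.mem_erase.mpr ⟨?_, Finset.mem_erase.mpr ⟨?_, hvA⟩⟩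
    · rintro rfl
      have h2 := two_le_degE hfM heM hfe hvf hbe
      have := hdeg v; omega
    · rintro rfl
      have h2 := two_le_degE hfM heM hfe hvf hae
      have := hdeg v; omega
  · -- insert lands in the filter
    intro M' hM'
    rw [MatchF, Finset.mem_filter, Finset.mem_powerset] at hM'
    obtain ⟨hsub, hdeg, hcov⟩ := hM'
    have haM' : degE a M' = 0 := by
      by_contra h
      have := hcov a (Nat.pos_of_ne_zero h)
      rw [Finset.mem_erase] at this
      exact (Finset.notMem_erase a A) this.2
    have hbM' : degE b M' = 0 := by
      by_contra h
      have := hcov b (Nat.pos_of_ne_zero h)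
      exact (Finset.notMem_erase b _) this
    have heM' : e ∉ M' := fun h => by
      have : 0 < degE a M' := degE_pos_iff.mpr ⟨e, h, hae⟩
      omega
    rw [Finset.mem_filter, MatchF, Finset.mem_filter, Finset.mem_powerset]
    refine ⟨⟨Finset.insert_subset hbE hsub, fun v => ?_, fun v hv => ?_⟩,
      Finset.mem_insert_self e M'⟩
    · rw [degE_insert_of_not_mem heM' v]
      by_cases hve : v ∈ e
      · rcases Sym2.mem_iff.mp hve with rfl | rfl
        · simp [hve, haM']
        · simp [hve, hbM']
      · simp only [hve, if_false]
        exact le_trans (by omega) (hdeg v)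
    · rw [degE_insert_of_not_mem heM' v] at hv
      by_cases hve : v ∈ e
      · rcases Sym2.mem_iff.mp hve with rfl | rfl
        · exact ha
        · exact hbA'
      · simp only [hve, if_false, zero_add] at hv
        exact Finset.mem_of_mem_erase (Finset.mem_of_mem_erase (hcov v hv))
  · intro M hM
    exact Finset.insert_erase (Finset.mem_filter.mp hM).2
  · intro M' hM'
    apply Finset.erase_insert
    rw [MatchF, Finset.mem_filter, Finset.mem_powerset] at hM'
    obtain ⟨hsub, hdeg, hcov⟩ := hM'
    intro h
    have := hcov a (degE_pos_iff.mpr ⟨e, h, hae⟩)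
    rw [Finset.mem_erase] at this
    exact (Finset.notMem_erase a A) this.2
  · -- weights agree
    intro M hM
    rw [Finset.mem_filter] at hM
    obtain ⟨hMm, heM⟩ := hM
    have h2 : 2 * M.card ≤ A.card := two_mul_card_le hE hMm
    have hMc : 1 ≤ M.card := Finset.card_pos.mpr ⟨e, heM⟩
    have hcardse : (M.erase e).card = M.card - 1 := Finset.card_erase_of_mem heM
    have hcardA : ((A.erase a).erase b).card = A.card - 2 := by
      rw [Finset.card_erase_of_mem hbA, Finset.card_erase_of_mem ha]
      omega
    rw [hcardse, hcardA]
    have hexp : A.card - 2 - 2 * (M.card - 1) = A.card - 2 * M.card := by omega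
    rw [hexp]
    have hpow : (γ - γ^2) * (γ - γ^2)^(M.card - 1) = (γ - γ^2)^M.card := by
      rw [← pow_succ']
      congr 1
      omega
    rw [← hpow]
    ring
lemma RR_rec {E : Finset (Sym2 V)} (hE : ∀ e ∈ E, ¬ e.IsDiag) (γ : ℂ) (q : ℕ)
    {A : Finset V} {a : V} (ha : a ∈ A) :
    RR E γ q A = (1 - ((q:ℂ)+1)*γ) * RR E γ q (A.erase a)
      + ∑ b ∈ (nbrE E a).filter (fun b => b ∈ A.erase a),
          (γ - γ^2) * RR E γ q ((A.erase a).erase b) := by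
  classical
  set δ := (1 - ((q:ℂ)+1)*γ) with hδ
  rw [RR, ← Finset.sum_filter_add_sum_filter_not (MatchF E A) (fun M => 0 < degE a M)]
  have huncov : ∑ M ∈ (MatchF E A).filter (fun M => ¬ 0 < degE a M),
      (γ - γ^2)^M.card * δ^(A.card - 2*M.card) = δ * RR E γ q (A.erase a) := by
    rw [matchF_erase_eq, RR, Finset.mul_sum]
    refine Finset.sum_congr rfl fun M hM => ?_
    have h2 : 2 * M.card ≤ (A.erase a).card := two_mul_card_le hE hM
    have hcard : A.card - 2 * M.card = ((A.erase a).card - 2 * M.card) + 1 := by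
      rw [Finset.card_erase_of_mem ha] at h2 ⊢
      have : 1 ≤ A.card := Finset.card_pos.mpr ⟨a, ha⟩
      omega
    rw [hcard, pow_succ]
    ring
  rw [huncov]
  -- covered part
  have hcov : ∑ M ∈ (MatchF E A).filter (fun M => 0 < degE a M),
      (γ - γ^2)^M.card * δ^(A.card - 2*M.card)
      = ∑ b ∈ (nbrE E a).filter (fun b => b ∈ A.erase a),
          (γ - γ^2) * RR E γ q ((A.erase a).erase b) := hcov_lemma hE γ q ha
  rw [hcov]
  ring
lemma Cfg_empty (E : Finset (Sym2 V)) : Cfg E (∅ : Finset V) = {fun _ => none} := by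
  ext c
  simp [Cfg, pool, Fintype.mem_piFinset, funext_iff]

lemma FF_empty (E : Finset (Sym2 V)) (γ : ℂ) : FF E γ (∅ : Finset V) = 1 := by
  rw [FF, Cfg_empty, Finset.sum_singleton]
  have h1 : pc (fun _ : V => (none : Option (Sym2 V))) = 0 := by simp [pc]
  have h2 : ec (fun _ : V => (none : Option (Sym2 V))) = ∅ := by
    simp [ec, Finset.eq_empty_iff_forall_notMem]
  rw [h1, h2]
  simp

lemma MatchF_empty {E : Finset (Sym2 V)} (hE : ∀ e ∈ E, ¬ e.IsDiag) :
    MatchF E (∅ : Finset V) = {∅} := by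
  ext M
  simp only [MatchF, mem_filter, mem_powerset, Finset.mem_singleton]
  constructor
  · rintro ⟨hsub, hdeg, hcov⟩
    rw [Finset.eq_empty_iff_forall_notMem]
    intro e heM
    have hx : e.out.1 ∈ e := Sym2.out_fst_mem e
    have : 0 < degE e.out.1 M := by
      rw [degE, Finset.card_pos, Finset.filter_nonempty_iff]; exact ⟨e, heM, hx⟩
    exact Finset.notMem_empty _ (hcov _ this)
  · rintro rfl
    refine ⟨Finset.empty_subset E, fun v => ?_, fun v hv => ?_⟩
    · simp [degE]
    · simp [degE] at hv
lemma RR_empty {E : Finset (Sym2 V)} (hE : ∀ e ∈ E, ¬ e.IsDiag) (γ : ℂ) (q : ℕ) :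
    RR E γ q (∅ : Finset V) = 1 := by
  rw [RR, MatchF_empty hE, Finset.sum_singleton]
  simp

lemma FF_eq_RR {E : Finset (Sym2 V)} (hE : ∀ e ∈ E, ¬ e.IsDiag) (q : ℕ)
    (hq : ∀ v : V, (nbrE E v).card = q + 1) (γ : ℂ) (A : Finset V) :
    FF E γ A = RR E γ q A := by
  induction A using Finset.strongInduction with
  | _ A ih =>
    rcases Finset.eq_empty_or_nonempty A with rfl | ⟨a, ha⟩
    · rw [FF_empty, RR_empty hE]
    · rw [FF_rec hE γ ha, RR_rec hE γ q ha, ih (A.erase a) (Finset.erase_ssubset ha), hq a]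
      congr 1
      · push_cast; ring_nf
      · refine Finset.sum_congr rfl fun b hb => ?_
        rw [ih ((A.erase a).erase b)
          (lt_of_le_of_lt (Finset.erase_subset _ _) (Finset.erase_ssubset ha))]

end aux

theorem stmt_18 {V : Type} [Fintype V] [DecidableEq V]
    (G : SimpleGraph V) [DecidableRel G.Adj]
    -- a finite connected `(q+1)`-regular simple graph, `q ≥ 1`
    (q : ℕ) (hq : 1 ≤ q)
    (hconn : G.Connected) (hreg : ∀ i : V, G.degree i = q + 1)
    (u : ℝ) (hu0 : u ≠ 0) (hu1 : u ^ 2 ≠ 1) :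
    thetaGI G ((u : ℂ) ^ 2) =
      (1 - (u : ℂ) ^ 2) ^ (G.edgeFinset.card - Fintype.card V) *
        -- the matching polynomial `α_G` evaluated at `1/u + q·u` ...
        (∑ k ∈ Finset.range (Fintype.card V / 2 + 1),
          (-1 : ℂ) ^ k * (numMatchings G k : ℂ) *
            ((u : ℂ)⁻¹ + (q : ℂ) * (u : ℂ)) ^ (Fintype.card V - 2 * k)) *
        -- ... times `u^n`
        (u : ℂ) ^ Fintype.card V := by
  classical
  set E := G.edgeFinset with hEdef
  set n := Fintype.card V with hn
  set β : ℂ := (u : ℂ)^2 with hβ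
  have hE : ∀ e ∈ E, ¬ e.IsDiag := fun e he => by
    rw [hEdef, SimpleGraph.mem_edgeFinset] at he
    exact G.not_isDiag_of_mem_edgeSet he
  have huC : (u : ℂ) ≠ 0 := by exact_mod_cast hu0
  have hβ1 : β ≠ 1 := by
    rw [hβ]
    intro h
    exact hu1 (by exact_mod_cast h)
  have h1β : (1 : ℂ) - β ≠ 0 := sub_ne_zero.mpr (Ne.symm hβ1)
  set γ : ℂ := -β / (1 - β) with hγ
  -- degrees
  have hnbr : ∀ v : V, nbrE E v = G.neighborFinset v := by
    intro v
    ext b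
    simp only [nbrE, Finset.mem_filter, Finset.mem_univ, true_and,
      SimpleGraph.mem_neighborFinset, hEdef, SimpleGraph.mem_edgeFinset,
      SimpleGraph.mem_edgeSet]
    constructor
    · rintro ⟨hadj, -⟩; exact hadj
    · intro hadj; exact ⟨hadj, fun h => G.irrefl (h ▸ hadj)⟩
  have hdeg : ∀ v : V, (nbrE E v).card = q + 1 := by
    intro v; rw [hnbr v, SimpleGraph.card_neighborFinset_eq_degree]; exact hreg v
  -- n ≤ |E|
  have hnE : n ≤ E.card := by
    have h2 := G.sum_degrees_eq_twice_card_edges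
    rw [← hEdef] at h2
    have h3 : ∑ v : V, G.degree v = n * q + n := by
      rw [Finset.sum_congr rfl (fun v _ => hreg v), Finset.sum_const, hn, Finset.card_univ,
        smul_eq_mul]
      ring
    have h4 : n ≤ n * q := Nat.le_mul_of_pos_right n hq
    omega
  -- Step 1 : theta in terms of (1 - deg) products
  have step1 : thetaGI G β = ∑ s ∈ E.powerset, (-β)^s.card * ∏ v : V, ((1:ℂ) - (degE v s : ℂ)) := by
    rw [thetaGI]
    refine Finset.sum_congr rfl fun s hs => ?_
    have hssub : s ⊆ E := Finset.mem_powerset.mp hs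
    have hprod : ∏ i : V, chebFC (degE i s) (Complex.I - Complex.I⁻¹)
        = (∏ v : V, ((1:ℂ) - (degE v s : ℂ))) * (-1 : ℂ)^s.card := by
      rw [Finset.prod_congr rfl (fun v _ => chebFC_eval (degE v s)), Finset.prod_mul_distrib]
      congr 1
      rw [Finset.prod_pow_eq_pow_sum, handshake s (fun e he => hE e (hssub he)),
        pow_mul, Complex.I_sq]
    rw [hprod]
    ring
  rw [step1, theta_as_config E β]
  -- Step 2 : scale to FF
  have step2 : ∑ c ∈ Cfg E univ, (-1:ℂ)^(pc c) * ((-β)^(ec c).card * (1-β)^(E.card - (ec c).card))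
      = (1-β)^E.card * FF E γ univ := by
    rw [FF, Finset.mul_sum]
    refine Finset.sum_congr rfl fun c hc => ?_
    have hm : (ec c).card ≤ E.card := Finset.card_le_card (ec_subset hc)
    have key : (-β)^(ec c).card * (1-β)^(E.card - (ec c).card) = (1-β)^E.card * γ^(ec c).card := by
      rw [hγ, div_pow, ← pow_mul_pow_sub (1-β) hm]
      field_simp
    rw [key]
    ring
  rw [step2, FF_eq_RR hE q hdeg γ univ]
  -- Step 3 : RR univ as sum over k
  have step3 : RR E γ q univ = ∑ k ∈ Finset.range (n / 2 + 1),
      (numMatchings G k : ℂ) * ((γ - γ^2)^k * (1 - ((q:ℂ)+1)*γ)^(n - 2*k)) := by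
    rw [RR]
    rw [← Finset.sum_fiberwise_of_maps_to (g := Finset.card) (fun M hM => ?_)]
    · refine Finset.sum_congr rfl fun k _ => ?_
      have hconst : ∀ M ∈ (MatchF E univ).filter (fun M => M.card = k),
          (γ - γ^2)^M.card * (1 - ((q:ℂ)+1)*γ)^((univ : Finset V).card - 2*M.card)
          = (γ - γ^2)^k * (1 - ((q:ℂ)+1)*γ)^(n - 2*k) := by
        intro M hM
        rw [(Finset.mem_filter.mp hM).2, hn, Finset.card_univ]
      rw [Finset.sum_congr rfl hconst, Finset.sum_const, nsmul_eq_mul]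
      congr 2
      rw [numMatchings]
      congr 1
      ext M
      simp only [MatchF, Finset.mem_filter, Finset.mem_powerset, Finset.mem_univ]
      tauto
    · rw [Finset.mem_range]
      have h2 := two_mul_card_le hE hM
      rw [Finset.card_univ, ← hn] at h2
      omega
  rw [step3, Finset.mul_sum, Finset.mul_sum, Finset.sum_mul]
  -- Step 4 : termwise algebra
  refine Finset.sum_congr rfl fun k hk => ?_
  rw [Finset.mem_range] at hk
  have h2k : 2 * k ≤ n := by omega
  have hsplitE : (1-β)^E.card = (1-β)^(E.card - n) * (1-β)^n := by
    rw [← pow_add]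
    congr 1
    omega
  have hsplitn : ((1:ℂ)-β)^n = ((1-β)^2)^k * (1-β)^(n - 2*k) := by
    rw [← pow_mul, ← pow_add]
    congr 1
    omega
  have e1 : ((1:ℂ)-β)^2 * (γ - γ^2) = -β := by
    rw [hγ]
    field_simp
    ring
  have e2 : ((1:ℂ)-β) * (1 - ((q:ℂ)+1)*γ) = 1 + q*β := by
    rw [hγ]
    field_simp
    ring
  have e3 : (1:ℂ) + q*β = (u:ℂ) * ((u:ℂ)⁻¹ + q*u) := by
    rw [hβ]
    field_simp
  have e4 : (-β)^k = (-1:ℂ)^k * (u:ℂ)^(2*k) := by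
    rw [hβ, neg_pow, ← pow_mul]
  calc (1-β)^E.card * ((numMatchings G k : ℂ) * ((γ - γ^2)^k * (1 - ((q:ℂ)+1)*γ)^(n - 2*k)))
      = (1-β)^(E.card - n) * ((numMatchings G k : ℂ) *
          ((((1-β)^2) * (γ-γ^2))^k * ((1-β) * (1 - ((q:ℂ)+1)*γ))^(n-2*k))) := by
        rw [hsplitE, hsplitn, mul_pow, mul_pow]
        ring
    _ = (1-β)^(E.card - n) * ((numMatchings G k : ℂ) *
          (((-1:ℂ)^k * (u:ℂ)^(2*k)) * (((u:ℂ) * ((u:ℂ)⁻¹ + q*u))^(n-2*k)))) := by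
        rw [e1, e2, e3, e4]
    _ = (1-β)^(E.card - n) * ((-1:ℂ)^k * (numMatchings G k : ℂ) *
          ((u:ℂ)⁻¹ + q*u)^(n-2*k)) * (u:ℂ)^n := by
        rw [mul_pow]
        have : (u:ℂ)^(2*k) * (u:ℂ)^(n-2*k) = (u:ℂ)^n := by
          rw [← pow_add]
          congr 1
          omega
        rw [← this]
        ring
end

section
/- Let V be a finite set, F a finite family of subsets of V, and for each λ ∈ F and each I ⊆ λ let β^λ_I be a real number, with the conventions β^λ_∅ = 1 and β^λ_I = 0 whenever |I| = 1. Let {ξ_i}_{i∈V} be positive reals. Then Σ_{x : V → {±1}} ∏_{λ∈F} ( Σ_{I ⊆ λ} β^λ_I ∏_{i∈I} x_i ξ_i^{−x_i} ) ∏_{i∈V} ξ_i^{x_i}/(ξ_i + ξ_i⁻¹) = Σ_{s ⊆ E_H} ∏_{λ∈F} (−1)^{|I_λ(s)|} β^λ_{I_λ(s)} ∏_{i∈V} f_{d_i(s)}(ξ_i − ξ_i⁻¹). -/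
/-- The polynomials `f_n` defined by `f_0 = 1`, `f_1 = 0`,
`f_{n+1}(x) = x f_n(x) + f_{n-1}(x)`. -/
def chebF : ℕ → ℝ → ℝ
  | 0, _ => 1
  | 1, _ => 0
  | n + 2, x => x * chebF (n + 1) x + chebF n x

/-- The spin `+1` or `-1` associated to a Boolean. -/
def sgn (b : Bool) : ℤ := if b then 1 else -1

lemma cheb_key (x : ℝ) (hx : x ≠ 0) (d : ℕ) :
    (x⁻¹)^d * x + (-1:ℝ)^d * x^d * x⁻¹ = (-1)^d * chebF d (x - x⁻¹) * (x + x⁻¹) := by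
  have h : x * x⁻¹ = 1 := mul_inv_cancel₀ hx
  induction d using Nat.twoStepInduction with
  | zero => simp [chebF]
  | one => simp [chebF]; field_simp; norm_num
  | more n ih1 ih2 =>
      show _ = _ * ((x - x⁻¹) * chebF (n+1) (x - x⁻¹) + chebF n (x - x⁻¹)) * _
      linear_combination (-(x - x⁻¹)) * ih2 + ih1 + (x * (x⁻¹)^n + (-1:ℝ)^n * x^n * x⁻¹) * h

lemma bool_sum (x : ℝ) (hx : 0 < x) (d : ℕ) :
    ∑ b : Bool, ((sgn b : ℝ) * x ^ (-(sgn b)))^d * (x ^ (sgn b) / (x + x⁻¹))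
      = (-1)^d * chebF d (x - x⁻¹) := by
  have hx0 : x ≠ 0 := ne_of_gt hx
  have hden : x + x⁻¹ ≠ 0 := by positivity
  have key := cheb_key x hx0 d
  rw [Fintype.sum_bool]
  simp only [sgn, Bool.false_eq_true, reduceIte, Int.cast_one, Int.cast_neg, zpow_one,
    zpow_neg, neg_neg, mul_pow, one_pow, one_mul, inv_inv]
  rw [← mul_div_assoc, ← mul_div_assoc, ← add_div, key, mul_div_cancel_right₀ _ hden]

lemma prod_sum_powerset {V : Type} [DecidableEq V] (F : Finset (Finset V))
    (t : Finset V → Finset V → ℝ) :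
    ∏ lam ∈ F, ∑ I ∈ lam.powerset, t lam I
      = ∑ s ∈ (F.biUnion fun lam => lam.image fun i => (i, lam)).powerset,
          ∏ lam ∈ F, t lam (lam.filter fun i => (i, lam) ∈ s) := by
  rw [Finset.prod_sum]
  have mem_s : ∀ (p : (lam : Finset V) → lam ∈ F → Finset V) (e : V × Finset V),
      (e ∈ F.attach.biUnion fun lam => (p lam.1 lam.2).image fun i => (i, lam.1)) ↔
        ∃ h : e.2 ∈ F, e.1 ∈ p e.2 h := by
    intro p e
    simp only [Finset.mem_biUnion, Finset.mem_image, Finset.mem_attach, true_and,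
      Subtype.exists]
    constructor
    · rintro ⟨lam, hlam, i, hi, rfl⟩
      exact ⟨hlam, hi⟩
    · rintro ⟨h2, h1⟩
      exact ⟨e.2, h2, e.1, h1, rfl⟩
  have filt : ∀ p ∈ F.pi (fun lam => lam.powerset), ∀ lam (hlam : lam ∈ F),
      (lam.filter fun i =>
        (i, lam) ∈ F.attach.biUnion fun l => (p l.1 l.2).image fun i => (i, l.1)) = p lam hlam := by
    intro p hp lam hlam
    have hsub : p lam hlam ⊆ lam := Finset.mem_powerset.mp (Finset.mem_pi.mp hp lam hlam)
    ext i
    simp only [Finset.mem_filter, mem_s]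
    constructor
    · rintro ⟨hi, h2, h1⟩
      exact h1
    · intro hi
      exact ⟨hsub hi, hlam, hi⟩
  refine Finset.sum_bij'
    (fun p _ => F.attach.biUnion fun lam => (p lam.1 lam.2).image fun i => (i, lam.1))
    (fun s _ => fun lam hlam => lam.filter fun i => (i, lam) ∈ s) ?_ ?_ ?_ ?_ ?_
  · intro p hp
    rw [Finset.mem_powerset]
    intro e he
    rw [mem_s] at he
    obtain ⟨h2, h1⟩ := he
    have hsub : p e.2 h2 ⊆ e.2 := Finset.mem_powerset.mp (Finset.mem_pi.mp hp e.2 h2)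
    rw [Finset.mem_biUnion]
    exact ⟨e.2, h2, Finset.mem_image.mpr ⟨e.1, hsub h1, by simp⟩⟩
  · intro s hs
    rw [Finset.mem_pi]
    intro lam hlam
    exact Finset.mem_powerset.mpr (Finset.filter_subset _ _)
  · intro p hp
    funext lam hlam
    exact filt p hp lam hlam
  · intro s hs
    ext e
    rw [mem_s (fun lam _ => Finset.filter (fun i => (i, lam) ∈ s) lam) e]
    constructor
    · rintro ⟨h2, h1⟩
      rw [Finset.mem_filter] at h1
      exact h1.2
    · intro he
      have heEH := Finset.mem_powerset.mp hs he
      rw [Finset.mem_biUnion] at heEH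
      obtain ⟨lam, hlam, hmem⟩ := heEH
      rw [Finset.mem_image] at hmem
      obtain ⟨i, hi, rfl⟩ := hmem
      exact ⟨hlam, Finset.mem_filter.mpr ⟨hi, he⟩⟩
  · intro p hp
    rw [← Finset.prod_attach F (fun lam => t lam (lam.filter fun i =>
      (i, lam) ∈ F.attach.biUnion fun l => (p l.1 l.2).image fun i => (i, l.1)))]
    refine Finset.prod_congr rfl fun x _ => ?_
    rw [filt p hp x.1 x.2]

lemma prod_prod_filter {V : Type} [Fintype V] [DecidableEq V] (F : Finset (Finset V))
    (s : Finset (V × Finset V)) (hs : ∀ e ∈ s, e.1 ∈ e.2)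
    (g : V → ℝ) :
    ∏ lam ∈ F, ∏ i ∈ lam.filter (fun i => (i, lam) ∈ s), g i
      = ∏ i : V, g i ^ (F.filter fun lam => (i, lam) ∈ s).card := by
  have h1 : ∀ lam ∈ F, ∏ i ∈ lam.filter (fun i => (i, lam) ∈ s), g i
      = ∏ i : V, if (i, lam) ∈ s then g i else 1 := by
    intro lam hlam
    rw [Finset.prod_filter]
    apply Finset.prod_subset (Finset.subset_univ lam)
    intro i _ hi
    have : (i, lam) ∉ s := fun his => hi (hs _ his)
    simp [this]
  rw [Finset.prod_congr rfl h1, Finset.prod_comm]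
  refine Finset.prod_congr rfl fun i _ => ?_
  rw [← Finset.prod_filter, Finset.prod_const]

lemma count_swap {V : Type} [Fintype V] [DecidableEq V] (F : Finset (Finset V))
    (s : Finset (V × Finset V)) (hs : ∀ e ∈ s, e.1 ∈ e.2) :
    ∑ lam ∈ F, (lam.filter fun i => (i, lam) ∈ s).card
      = ∑ i : V, (F.filter fun lam => (i, lam) ∈ s).card := by
  have h1 : ∀ lam ∈ F, (lam.filter fun i => (i, lam) ∈ s).card
      = ∑ i : V, if (i, lam) ∈ s then 1 else 0 := by
    intro lam hlam
    rw [Finset.card_filter]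
    apply Finset.sum_subset (Finset.subset_univ lam)
    intro i _ hi
    have : (i, lam) ∉ s := fun his => hi (hs _ his)
    simp [this]
  rw [Finset.sum_congr rfl h1, Finset.sum_comm]
  exact Finset.sum_congr rfl fun i _ => (Finset.card_filter _ _).symm

theorem stmt_19 {V : Type} [Fintype V] [DecidableEq V]
    -- a hypergraph: a finite family `F` of subsets of `V`
    (F : Finset (Finset V))
    -- the coefficients `β^λ_I`, with the conventions `β^λ_∅ = 1` and
    -- `β^λ_I = 0` when `|I| = 1`
    (β : Finset V → Finset V → ℝ)
    (hβ0 : ∀ lam ∈ F, β lam ∅ = 1)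
    (hβ1 : ∀ lam ∈ F, ∀ I ⊆ lam, I.card = 1 → β lam I = 0)
    (ξ : V → ℝ) (hξ : ∀ i, 0 < ξ i)
    -- the edge set `E_H` of the bipartite factor graph
    (EH : Finset (V × Finset V))
    (hEH : EH = F.biUnion fun lam => lam.image fun i => (i, lam)) :
    ∑ x : V → Bool,
      (∏ lam ∈ F, ∑ I ∈ lam.powerset,
          β lam I * ∏ i ∈ I, (sgn (x i) : ℝ) * ξ i ^ (-(sgn (x i)))) *
        ∏ i : V, ξ i ^ (sgn (x i)) / (ξ i + (ξ i)⁻¹)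
    = ∑ s ∈ EH.powerset,
        (∏ lam ∈ F,
          (-1 : ℝ) ^ (lam.filter fun i => (i, lam) ∈ s).card *
            β lam (lam.filter fun i => (i, lam) ∈ s)) *
        ∏ i : V, chebF ((F.filter fun lam => (i, lam) ∈ s).card) (ξ i - (ξ i)⁻¹) := by
  subst hEH
  have step1 : ∀ x : V → Bool,
      (∏ lam ∈ F, ∑ I ∈ lam.powerset,
          β lam I * ∏ i ∈ I, (sgn (x i) : ℝ) * ξ i ^ (-(sgn (x i))))
        = ∑ s ∈ (F.biUnion fun lam => lam.image fun i => (i, lam)).powerset,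
            ∏ lam ∈ F, (β lam (lam.filter fun i => (i, lam) ∈ s) *
              ∏ i ∈ lam.filter (fun i => (i, lam) ∈ s),
                (sgn (x i) : ℝ) * ξ i ^ (-(sgn (x i)))) :=
    fun x => prod_sum_powerset F
      (fun lam I => β lam I * ∏ i ∈ I, (sgn (x i) : ℝ) * ξ i ^ (-(sgn (x i))))
  simp only [step1, Finset.sum_mul]
  rw [Finset.sum_comm]
  refine Finset.sum_congr rfl fun s hs => ?_
  have hmem : ∀ e ∈ s, e.1 ∈ e.2 := by
    intro e he
    have h := Finset.mem_powerset.mp hs he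
    rw [Finset.mem_biUnion] at h
    obtain ⟨lam, hlam, h2⟩ := h
    rw [Finset.mem_image] at h2
    obtain ⟨i, hi, rfl⟩ := h2
    exact hi
  have step2 : ∀ x : V → Bool,
      (∏ lam ∈ F, β lam (lam.filter fun i => (i, lam) ∈ s) *
          ∏ i ∈ lam.filter (fun i => (i, lam) ∈ s),
            (sgn (x i) : ℝ) * ξ i ^ (-(sgn (x i)))) *
        ∏ i : V, ξ i ^ (sgn (x i)) / (ξ i + (ξ i)⁻¹)
      = (∏ lam ∈ F, β lam (lam.filter fun i => (i, lam) ∈ s)) *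
        ∏ i : V, (((sgn (x i) : ℝ) * ξ i ^ (-(sgn (x i)))) ^
            (F.filter fun lam => (i, lam) ∈ s).card *
          (ξ i ^ (sgn (x i)) / (ξ i + (ξ i)⁻¹))) := by
    intro x
    rw [Finset.prod_mul_distrib, prod_prod_filter F s hmem, Finset.prod_mul_distrib, mul_assoc]
  rw [Finset.sum_congr rfl fun x _ => step2 x, ← Finset.mul_sum]
  rw [← Fintype.piFinset_univ,
    ← Finset.prod_univ_sum (fun _ => (Finset.univ : Finset Bool))
      (fun i b => ((sgn b : ℝ) * ξ i ^ (-(sgn b))) ^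
          (F.filter fun lam => (i, lam) ∈ s).card *
        (ξ i ^ (sgn b) / (ξ i + (ξ i)⁻¹)))]
  have step3 : ∀ i : V,
      (∑ b : Bool, ((sgn b : ℝ) * ξ i ^ (-(sgn b))) ^
          (F.filter fun lam => (i, lam) ∈ s).card *
        (ξ i ^ (sgn b) / (ξ i + (ξ i)⁻¹)))
      = (-1:ℝ) ^ ((F.filter fun lam => (i, lam) ∈ s).card) *
          chebF ((F.filter fun lam => (i, lam) ∈ s).card) (ξ i - (ξ i)⁻¹) :=
    fun i => bool_sum (ξ i) (hξ i) _
  rw [Finset.prod_congr rfl fun i _ => step3 i, Finset.prod_mul_distrib,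
    Finset.prod_mul_distrib, Finset.prod_pow_eq_pow_sum, Finset.prod_pow_eq_pow_sum,
    count_swap F s hmem]
  ring
end
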